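/- Let G = Iₙ + vᵀv for a row vector v ∈ ℝⁿ and B = diag(d₁,…,dₙ). Then for each r, Σ_{i₁<…<i_r} det[G¹,…,B^{i₁},…,B^{i_r},…,Gⁿ] = Σ_{i₁<…<i_r} d_{i₁}⋯d_{i_r}·(1 + Σ_{m∉{i₁,…,i_r}} v_m²), where the determinant is of the matrix whose columns are those of G except that columns i₁,…,i_r are replaced by the corresponding columns of B. -/
import Mathlib


open Matrix

/-- Determinant of a diagonal matrix with one row replaced. -/
lemma det_updateRow_diagonal {n : ℕ} (c : Fin n → ℝ) (j : Fin n) (u : Fin n → ℝ) :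
    ((Matrix.diagonal c).updateRow j u).det = u j * ∏ k ∈ Finset.univ.erase j, c k := by
  classical
  rw [Matrix.det_apply]
  rw [Finset.sum_eq_single (1 : Equiv.Perm (Fin n))]
  · rw [Equiv.Perm.sign_one, one_smul]
    have key : ∀ i : Fin n, ((Matrix.diagonal c).updateRow j u) i i
        = if i = j then u j else c i := by
      intro i
      by_cases h : i = j
      · subst h; simp
      · rw [Matrix.updateRow_ne h, if_neg h]
        exact Matrix.diagonal_apply_eq c i
    calc ∏ i, ((Matrix.diagonal c).updateRow j u) ((1 : Equiv.Perm (Fin n)) i) i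
        = ∏ i, (if i = j then u j else c i) := by
          apply Finset.prod_congr rfl; intro i _; simpa using key i
      _ = u j * ∏ k ∈ Finset.univ.erase j, c k := by
          rw [← Finset.mul_prod_erase Finset.univ _ (Finset.mem_univ j)]
          simp only [if_pos rfl]
          congr 1
          apply Finset.prod_congr rfl
          intro k hk
          rw [if_neg (Finset.ne_of_mem_erase hk)]
  · intro σ _ hσ
    have hex : ∃ i : Fin n, σ i ≠ i ∧ σ i ≠ j := by
      by_contra h
      push_neg at h
      obtain ⟨a, haa⟩ : ∃ a, σ a ≠ a := by
        by_contra hAll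
        push_neg at hAll
        exact hσ (Equiv.ext hAll)
      have haj : σ a = j := h a haa
      have hja : σ j ≠ j := by
        intro hjj
        have haj' : a = j := σ.injective (by rw [haj, hjj])
        exact haa (by rw [haj', hjj])
      exact hja (h j hja)
    obtain ⟨i, hi, hij⟩ := hex
    rw [Finset.prod_eq_zero (Finset.mem_univ i), smul_zero]
    rw [Matrix.updateRow_ne hij, Matrix.diagonal_apply_ne _ hi]
  · simp

/-- Per-set value of terms in the multilinear expansion. -/
lemma piece_det {n : ℕ} (c v w : Fin n → ℝ) (s : Finset (Fin n)) :
    Matrix.det (fun i => if i ∈ s then Matrix.diagonal c i else v i • w) =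
      (if s = Finset.univ then ∏ i, c i else 0)
      + ∑ j, (if s = Finset.univ.erase j then
          v j * w j * ∏ k ∈ Finset.univ.erase j, c k else 0) := by
  classical
  by_cases hu : s = Finset.univ
  · subst hu
    have h1 : (fun i => if i ∈ (Finset.univ : Finset (Fin n)) then Matrix.diagonal c i
        else v i • w) = Matrix.diagonal c := by
      ext i k; simp
    rw [h1, Matrix.det_diagonal, if_pos rfl]
    have hz : ∀ j : Fin n, (if (Finset.univ : Finset (Fin n)) = Finset.univ.erase j then
        v j * w j * ∏ k ∈ Finset.univ.erase j, c k else 0) = 0 := by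
      intro j
      rw [if_neg]
      intro h
      have : j ∈ Finset.univ.erase j := h ▸ Finset.mem_univ j
      exact (Finset.notMem_erase j _) this
    rw [Finset.sum_congr rfl (fun j _ => hz j), Finset.sum_const_zero, add_zero]
  · rw [if_neg hu]
    by_cases he : ∃ j, s = Finset.univ.erase j
    · obtain ⟨j, hj⟩ := he
      have hjs : j ∉ s := by rw [hj]; exact Finset.notMem_erase j _
      have hmem : ∀ i : Fin n, i ∈ s ↔ i ≠ j := by
        intro i; rw [hj]; simp [Finset.mem_erase]
      have h1 : (fun i => if i ∈ s then Matrix.diagonal c i else v i • w)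
          = (Matrix.diagonal c).updateRow j (v j • w) := by
        ext i k
        by_cases h : i = j
        · subst h
          rw [Matrix.updateRow_self, if_neg hjs]
        · rw [Matrix.updateRow_ne h, if_pos ((hmem i).mpr h)]
      rw [h1, Matrix.det_updateRow_smul, det_updateRow_diagonal]
      rw [Finset.sum_eq_single j]
      · rw [if_pos hj, zero_add]
        ring
      · intro j' _ hj'
        rw [if_neg]
        intro h
        have hjs' : j' ∈ s := (hmem j').mpr hj'
        rw [h] at hjs'
        exact Finset.notMem_erase j' _ hjs'
      · intro h; exact absurd (Finset.mem_univ j) h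
    · push_neg at he
      obtain ⟨a, ha⟩ : ∃ a, a ∉ s := by
        by_contra h; push_neg at h; exact hu (Finset.eq_univ_iff_forall.mpr h)
      obtain ⟨b, hb, hbs⟩ : ∃ b, b ≠ a ∧ b ∉ s := by
        by_contra h
        push_neg at h
        apply he a
        apply Finset.Subset.antisymm
        · intro x hx
          exact Finset.mem_erase.mpr ⟨fun hxa => ha (hxa ▸ hx), Finset.mem_univ x⟩
        · intro x hx
          by_contra hxs
          exact hxs (h x (Finset.ne_of_mem_erase hx))
      set P : Matrix (Fin n) (Fin n) ℝ :=
        fun i => if i ∈ s then Matrix.diagonal c i else v i • w with hP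
      have hPa : P a = v a • w := by rw [hP]; simp [if_neg ha]
      have hQb : (P.updateRow a w) b = v b • w := by
        rw [Matrix.updateRow_ne hb, hP]; simp [if_neg hbs]
      have hz0 : ((P.updateRow a w).updateRow b w).det = 0 := by
        apply Matrix.det_zero_of_row_eq hb
        rw [Matrix.updateRow_self, Matrix.updateRow_ne hb.symm, Matrix.updateRow_self]
      have e2 : (P.updateRow a w).det = 0 := by
        have : P.updateRow a w = (P.updateRow a w).updateRow b (v b • w) := by
          rw [← hQb, Matrix.updateRow_eq_self]
        rw [this, Matrix.det_updateRow_smul, hz0, mul_zero]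
      have e1 : P.det = 0 := by
        have : P = P.updateRow a (v a • w) := by
          rw [← hPa, Matrix.updateRow_eq_self]
        rw [this, Matrix.det_updateRow_smul, e2, mul_zero]
      rw [show Matrix.det (fun i => if i ∈ s then Matrix.diagonal c i else v i • w)
          = P.det from rfl, e1]
      have h3 : ∀ j : Fin n, (if s = Finset.univ.erase j then
          v j * w j * ∏ k ∈ Finset.univ.erase j, c k else 0) = 0 := by
        intro j; rw [if_neg (he j)]
      rw [Finset.sum_congr rfl (fun j _ => h3 j), Finset.sum_const_zero, add_zero]

/-- Matrix determinant lemma for a diagonal matrix plus a rank one matrix. -/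
lemma det_diagonal_add_vecMulVec {n : ℕ} (c v w : Fin n → ℝ) :
    (Matrix.diagonal c + Matrix.vecMulVec v w).det =
      (∏ i, c i) + ∑ j, v j * w j * ∏ k ∈ Finset.univ.erase j, c k := by
  classical
  have h : (Matrix.diagonal c + Matrix.vecMulVec v w) =
      ((fun i => Matrix.diagonal c i) + (fun i => v i • w) : Matrix (Fin n) (Fin n) ℝ) := by
    ext i j
    simp [Matrix.add_apply, Matrix.vecMulVec_apply, smul_eq_mul]
  rw [h]
  rw [show Matrix.det ((fun i => Matrix.diagonal c i) + (fun i => v i • w)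
      : Matrix (Fin n) (Fin n) ℝ)
      = (Matrix.detRowAlternating :
          AlternatingMap ℝ (Fin n → ℝ) ℝ (Fin n)).toMultilinearMap
        ((fun i => Matrix.diagonal c i) + (fun i => v i • w)) from rfl,
    MultilinearMap.map_add_univ]
  have hterm : ∀ s : Finset (Fin n),
      (Matrix.detRowAlternating :
          AlternatingMap ℝ (Fin n → ℝ) ℝ (Fin n)).toMultilinearMap
        (s.piecewise (fun i => Matrix.diagonal c i) (fun i => v i • w))
      = (if s = Finset.univ then ∏ i, c i else 0)
        + ∑ j, (if s = Finset.univ.erase j then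
            v j * w j * ∏ k ∈ Finset.univ.erase j, c k else 0) := by
    intro s
    have hpw : s.piecewise (fun i => Matrix.diagonal c i) (fun i => v i • w)
        = fun i => if i ∈ s then Matrix.diagonal c i else v i • w := by
      funext i
      by_cases h : i ∈ s
      · rw [Finset.piecewise_eq_of_mem _ _ _ h, if_pos h]
      · rw [Finset.piecewise_eq_of_notMem _ _ _ h, if_neg h]
    rw [hpw, show (Matrix.detRowAlternating :
          AlternatingMap ℝ (Fin n → ℝ) ℝ (Fin n)).toMultilinearMap
        (fun i => if i ∈ s then Matrix.diagonal c i else v i • w)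
        = Matrix.det (fun i => if i ∈ s then Matrix.diagonal c i else v i • w) from rfl]
    exact piece_det c v w s
  rw [Finset.sum_congr rfl (fun s _ => hterm s), Finset.sum_add_distrib]
  congr 1
  · rw [Finset.sum_ite_eq' Finset.univ Finset.univ (fun _ => ∏ i, c i)]
    simp
  · rw [Finset.sum_comm]
    apply Finset.sum_congr rfl
    intro j _
    rw [Finset.sum_ite_eq' Finset.univ (Finset.univ.erase j)]
    simp

lemma column_det {n : ℕ} (v d : Fin n → ℝ) (s : Finset (Fin n)) :
    Matrix.det (fun i j => if j ∈ s then Matrix.diagonal d i j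
        else (1 + Matrix.vecMulVec v v) i j)
      = (∏ i ∈ s, d i) * (1 + ∑ m ∈ Finset.univ \ s, (v m) ^ 2) := by
  classical
  set c : Fin n → ℝ := fun j => if j ∈ s then d j else 1 with hc
  set w : Fin n → ℝ := fun j => if j ∈ s then 0 else v j with hw
  have hM : (fun i j => if j ∈ s then Matrix.diagonal d i j
      else (1 + Matrix.vecMulVec v v) i j)
      = (Matrix.diagonal c + Matrix.vecMulVec w v)ᵀ := by
    ext i j
    by_cases h : j ∈ s
    · rw [if_pos h]
      have hwj : w j = 0 := by rw [hw]; simp [if_pos h]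
      rw [Matrix.transpose_apply, Matrix.add_apply, Matrix.vecMulVec_apply, hwj,
        zero_mul, add_zero]
      by_cases hij : i = j
      · subst hij
        rw [Matrix.diagonal_apply_eq, Matrix.diagonal_apply_eq, hc]
        simp [if_pos h]
      · rw [Matrix.diagonal_apply_ne _ hij,
          Matrix.diagonal_apply_ne _ (fun hh => hij hh.symm)]
    · rw [if_neg h]
      have hwj : w j = v j := by rw [hw]; simp [if_neg h]
      rw [Matrix.transpose_apply, Matrix.add_apply, Matrix.add_apply,
        Matrix.vecMulVec_apply, Matrix.vecMulVec_apply, hwj]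
      by_cases hij : i = j
      · subst hij
        rw [Matrix.diagonal_apply_eq, Matrix.one_apply_eq, hc]
        simp [if_neg h, mul_comm]
      · rw [Matrix.diagonal_apply_ne _ (fun hh => hij hh.symm),
          Matrix.one_apply_ne hij]
        ring
  rw [hM, Matrix.det_transpose, det_diagonal_add_vecMulVec]
  have hprod : (∏ i, c i) = ∏ i ∈ s, d i := by
    rw [hc]
    rw [Finset.prod_ite_mem Finset.univ s d, Finset.univ_inter]
  have hsum : (∑ j, w j * v j * ∏ k ∈ Finset.univ.erase j, c k)
      = ∑ m ∈ Finset.univ \ s, (v m) ^ 2 * ∏ i ∈ s, d i := by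
    rw [← Finset.sum_sdiff (Finset.subset_univ s)]
    have h1 : ∀ j ∈ s, w j * v j * ∏ k ∈ Finset.univ.erase j, c k = 0 := by
      intro j hj
      have : w j = 0 := by rw [hw]; simp [if_pos hj]
      rw [this, zero_mul, zero_mul]
    rw [Finset.sum_congr rfl h1, Finset.sum_const_zero, add_zero]
    apply Finset.sum_congr rfl
    intro j hj
    rcases Finset.mem_sdiff.mp hj with ⟨_, hjs⟩
    have hw' : w j = v j := by rw [hw]; simp [if_neg hjs]
    have hp : (∏ k ∈ Finset.univ.erase j, c k) = ∏ i ∈ s, d i := by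
      rw [hc, Finset.prod_ite_mem (Finset.univ.erase j) s d]
      congr 1
      apply Finset.inter_eq_right.mpr
      intro x hx
      exact Finset.mem_erase.mpr ⟨fun h => hjs (h ▸ hx), Finset.mem_univ x⟩
    rw [hw', hp]; ring
  rw [hprod, hsum, mul_add, mul_one, Finset.mul_sum]
  congr 1
  apply Finset.sum_congr rfl
  intro m _
  ring

/-- For `G = Iₙ + vᵀv` and `B = diag d`, the sum over `r`-subsets of the determinants of
`G` with columns in the subset replaced by those of `B` equals
`Σ_{i₁<…<i_r} d_{i₁}⋯d_{i_r} (1 + Σ_{m∉{i₁,…,i_r}} v_m²)`. -/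
theorem mixed_column_det_sum (n r : ℕ) (v d : Fin n → ℝ) :
    let G : Matrix (Fin n) (Fin n) ℝ := 1 + Matrix.vecMulVec v v
    let B : Matrix (Fin n) (Fin n) ℝ := Matrix.diagonal d
    ∑ s ∈ Finset.powersetCard r Finset.univ,
        (Matrix.det fun i j => if j ∈ s then B i j else G i j) =
      ∑ s ∈ Finset.powersetCard r Finset.univ,
        (∏ i ∈ s, d i) * (1 + ∑ m ∈ Finset.univ \ s, (v m) ^ 2) := by
  intro G B
  apply Finset.sum_congr rfl
  intro s _
  exact column_det v d s
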